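/- Let Ω ⊂ ℝ^r be compact and let d_{SW_1} be the Sliced 1-Wasserstein distance on probability measures on Ω, d_{SW_1}(P,Q) = ∫_{S^{r−1}} ∫_0^1 |F_{θ*_#P}^{[-1]}(t) − F_{θ*_#Q}^{[-1]}(t)| dt dσ(θ). Then for every γ ≥ 0 the kernel K₁(P,Q) = exp(−γ · d_{SW_1}(P,Q)) is a positive definite kernel: for every n ∈ ℕ, all probability measures P_1, …, P_n on Ω and all c ∈ ℝ^n, Σ_{i,j=1}^n cᵢ cⱼ exp(−γ · d_{SW_1}(P_i,P_j)) ≥ 0. -/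

import Mathlib

open MeasureTheory
open scoped RealInnerProductSpace

/-- The generalized inverse cumulative distribution function (quantile function) of a
probability measure `μ` on `ℝ`: `F_μ^{[-1]}(t) = inf {x : F_μ(x) ≥ t}` where
`F_μ(x) = μ((−∞, x])`. -/
noncomputable def invCDF (μ : Measure ℝ) (t : ℝ) : ℝ :=
  sInf {x : ℝ | t ≤ (μ (Set.Iic x)).toReal}

/-- The uniform probability measure on the unit sphere `S^{r-1} ⊂ ℝ^r`
(the normalized surface measure). -/
noncomputable def uniformSphere (r : ℕ) :
    Measure (Metric.sphere (0 : EuclideanSpace ℝ (Fin r)) 1) :=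
  ((volume : Measure (EuclideanSpace ℝ (Fin r))).toSphere Set.univ)⁻¹ •
    (volume : Measure (EuclideanSpace ℝ (Fin r))).toSphere

/-- The Sliced 1-Wasserstein distance between probability measures on `ℝ^r`:
`d_{SW₁}(P,Q) = ∫_{S^{r−1}} ∫_0^1 |F_{θ*_#P}^{[-1]}(t) − F_{θ*_#Q}^{[-1]}(t)| dt dσ(θ)`. -/
noncomputable def slicedW1 {r : ℕ} (P Q : Measure (EuclideanSpace ℝ (Fin r))) : ℝ :=
  ∫ θ : Metric.sphere (0 : EuclideanSpace ℝ (Fin r)) 1,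
    (∫ t in Set.Ioc (0 : ℝ) 1,
      |invCDF (P.map fun x => ⟪x, (θ : EuclideanSpace ℝ (Fin r))⟫) t -
        invCDF (Q.map fun x => ⟪x, (θ : EuclideanSpace ℝ (Fin r))⟫) t|) ∂(uniformSphere r)


open scoped ENNReal


/-- Triple sum commutation helper. -/
lemma sw_sum_comm3 {n : ℕ} (f : Fin n → Fin n → Fin n → ℝ) :
    ∑ i, ∑ j, ∑ k, f i j k = ∑ k, ∑ i, ∑ j, f i j k := by
  calc ∑ i, ∑ j, ∑ k, f i j k = ∑ i, ∑ k, ∑ j, f i j k :=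
        Finset.sum_congr rfl fun i _ => Finset.sum_comm
    _ = ∑ k, ∑ i, ∑ j, f i j k := Finset.sum_comm

/-- The min kernel on nonnegative reals is positive semidefinite. -/
lemma sw_min_kernel_nonneg {n : ℕ} (a c : Fin n → ℝ) (ha : ∀ i, 0 ≤ a i) :
    0 ≤ ∑ i, ∑ j, c i * c j * min (a i) (a j) := by
  classical
  set B : ℝ := ∑ i, a i with hB
  have haB : ∀ i, a i ≤ B := fun i =>
    Finset.single_le_sum (fun j _ => ha j) (Finset.mem_univ i)
  set φ : Fin n → ℝ → ℝ := fun i => (Set.Iio (a i)).indicator 1 with hφ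
  have hprod : ∀ i j s, φ i s * φ j s = (Set.Iio (min (a i) (a j))).indicator 1 s := by
    intro i j s
    rw [← Set.Iio_inter_Iio, Set.inter_indicator_one]
    rfl
  have hint : ∀ i j, ∫ s in Set.Ioc (0:ℝ) B, φ i s * φ j s = min (a i) (a j) := by
    intro i j
    have h1 : (fun s => φ i s * φ j s) = (Set.Iio (min (a i) (a j))).indicator 1 :=
      funext (hprod i j)
    rw [h1, MeasureTheory.setIntegral_indicator measurableSet_Iio]
    have hset : Set.Ioc (0:ℝ) B ∩ Set.Iio (min (a i) (a j)) = Set.Ioo 0 (min (a i) (a j)) := by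
      ext s
      simp only [Set.mem_inter_iff, Set.mem_Ioc, Set.mem_Iio, Set.mem_Ioo]
      constructor
      · rintro ⟨⟨h1, _⟩, h2⟩; exact ⟨h1, h2⟩
      · rintro ⟨h1, h2⟩
        refine ⟨⟨h1, ?_⟩, h2⟩
        have : min (a i) (a j) ≤ B := le_trans (min_le_left _ _) (haB i)
        linarith
    rw [hset]
    have hmin : 0 ≤ min (a i) (a j) := le_min (ha i) (ha j)
    simp only [Pi.one_apply, MeasureTheory.setIntegral_const, Real.volume_Ioo,
      smul_eq_mul, mul_one]
    rw [Real.volume_real_Ioo_of_le hmin]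
    ring
  have hInt : ∀ i j, IntegrableOn (fun s => φ i s * φ j s) (Set.Ioc (0:ℝ) B) := by
    intro i j
    have h1 : (fun s => φ i s * φ j s) = (Set.Iio (min (a i) (a j))).indicator 1 :=
      funext (hprod i j)
    rw [h1, IntegrableOn, integrable_indicator_iff measurableSet_Iio]
    refine integrableOn_const (ne_of_lt ?_)
    calc (volume.restrict (Set.Ioc (0:ℝ) B)) (Set.Iio (min (a i) (a j)))
        ≤ volume (Set.Ioc (0:ℝ) B) := by
          rw [Measure.restrict_apply measurableSet_Iio]
          exact measure_mono Set.inter_subset_right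
      _ < ⊤ := by rw [Real.volume_Ioc]; exact ENNReal.ofReal_lt_top
  calc (0:ℝ) ≤ ∫ s in Set.Ioc (0:ℝ) B, (∑ i, c i * φ i s)^2 :=
        integral_nonneg fun s => sq_nonneg _
    _ = ∫ s in Set.Ioc (0:ℝ) B, ∑ i, ∑ j, (c i * c j) * (φ i s * φ j s) := by
        refine integral_congr_ae (Filter.Eventually.of_forall fun s => ?_)
        dsimp only
        rw [sq, Finset.sum_mul_sum]
        exact Finset.sum_congr rfl fun i _ => Finset.sum_congr rfl fun j _ => by ring
    _ = ∑ i, ∑ j, ∫ s in Set.Ioc (0:ℝ) B, (c i * c j) * (φ i s * φ j s) := by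
        rw [integral_finset_sum _ fun i _ =>
          integrable_finset_sum _ fun j _ => (hInt i j).const_mul _]
        exact Finset.sum_congr rfl fun i _ =>
          integral_finset_sum _ fun j _ => (hInt i j).const_mul _
    _ = ∑ i, ∑ j, c i * c j * min (a i) (a j) := by
        refine Finset.sum_congr rfl fun i _ => Finset.sum_congr rfl fun j _ => ?_
        rw [integral_const_mul, hint i j]

/-- The kernel `|a i - a j|` is conditionally negative definite. -/
lemma sw_abs_cnd {n : ℕ} (a c : Fin n → ℝ) (hc : ∑ i, c i = 0) :
    ∑ i, ∑ j, c i * c j * |a i - a j| ≤ 0 := by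
  classical
  set M : ℝ := ∑ i, |a i| with hM
  set x : Fin n → ℝ := fun i => a i + M with hx
  have hx0 : ∀ i, 0 ≤ x i := by
    intro i
    have h1 : |a i| ≤ M := Finset.single_le_sum (fun j _ => abs_nonneg (a j)) (Finset.mem_univ i)
    have h2 : -|a i| ≤ a i := neg_abs_le (a i)
    simp only [hx]; linarith
  have key : ∀ i j, |a i - a j| = (x i + x j) - 2 * min (x i) (x j) := by
    intro i j
    rcases le_total (a i) (a j) with h | h
    · rw [min_eq_left (by simp only [hx]; linarith), abs_of_nonpos (by linarith)]
      simp only [hx]; ring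
    · rw [min_eq_right (by simp only [hx]; linarith), abs_of_nonneg (by linarith)]
      simp only [hx]; ring
  have h1 : ∑ i, ∑ j, c i * c j * (x i + x j) = 0 := by
    have hrow : ∀ i, ∑ j, c i * c j * (x i + x j)
        = (c i * x i) * (∑ j, c j) + c i * (∑ j, c j * x j) := by
      intro i
      rw [Finset.mul_sum, Finset.mul_sum, ← Finset.sum_add_distrib]
      exact Finset.sum_congr rfl fun j _ => by ring
    rw [Finset.sum_congr rfl fun i _ => hrow i]
    rw [Finset.sum_add_distrib]
    rw [hc]
    simp only [mul_zero, Finset.sum_const_zero, zero_add]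
    rw [← Finset.sum_mul, hc, zero_mul]
  have h2 : 0 ≤ ∑ i, ∑ j, c i * c j * min (x i) (x j) := sw_min_kernel_nonneg x c hx0
  have h3 : ∑ i, ∑ j, c i * c j * |a i - a j|
      = ∑ i, ∑ j, c i * c j * (x i + x j) - 2 * ∑ i, ∑ j, c i * c j * min (x i) (x j) := by
    rw [Finset.mul_sum, ← Finset.sum_sub_distrib]
    refine Finset.sum_congr rfl fun i _ => ?_
    rw [Finset.mul_sum, ← Finset.sum_sub_distrib]
    refine Finset.sum_congr rfl fun j _ => ?_
    rw [key i j]; ring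
  linarith

/-- Hadamard powers of a PSD kernel are PSD (sum form). -/
lemma sw_psd_pow {n : ℕ} (K : Fin n → Fin n → ℝ) (hsym : ∀ i j, K i j = K j i)
    (hpsd : ∀ c : Fin n → ℝ, 0 ≤ ∑ i, ∑ j, c i * c j * K i j) (m : ℕ) :
    ∀ c : Fin n → ℝ, 0 ≤ ∑ i, ∑ j, c i * c j * (K i j) ^ m := by
  classical
  have hM : (Matrix.of K).PosSemidef := by
    refine Matrix.PosSemidef.of_dotProduct_mulVec_nonneg ?_ ?_
    · ext i j
      simp only [Matrix.conjTranspose_apply, Matrix.of_apply, star_trivial]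
      exact hsym j i
    · intro x
      have h := hpsd x
      simp only [dotProduct, Matrix.mulVec, Matrix.of_apply, star_trivial,
        dotProduct, Finset.mul_sum]
      calc (0:ℝ) ≤ ∑ i, ∑ j, x i * x j * K i j := h
        _ = ∑ i, ∑ j, x i * (K i j * x j) :=
            Finset.sum_congr rfl fun i _ => Finset.sum_congr rfl fun j _ => by ring
  open scoped MatrixOrder in
  obtain ⟨Bm, hBm⟩ := CStarAlgebra.nonneg_iff_eq_star_mul_self.mp hM.nonneg
  have hfact : ∀ i j, K i j = ∑ k, Bm k i * Bm k j := by
    intro i j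
    have := congrFun (congrFun hBm i) j
    simpa only [Matrix.mul_apply, Matrix.star_apply, Matrix.conjTranspose_apply, Matrix.of_apply,
      star_trivial] using this
  induction m with
  | zero =>
    intro c
    simp only [pow_zero, mul_one]
    calc (0:ℝ) ≤ (∑ i, c i) ^ 2 := sq_nonneg _
      _ = ∑ i, ∑ j, c i * c j := by rw [sq, Finset.sum_mul_sum]
  | succ m ih =>
    intro c
    have hterm : ∀ i j, c i * c j * K i j ^ (m + 1)
        = ∑ k, (c i * Bm k i) * (c j * Bm k j) * K i j ^ m := by
      intro i j
      calc c i * c j * K i j ^ (m + 1) = (c i * c j * K i j ^ m) * K i j := by ring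
        _ = (c i * c j * K i j ^ m) * ∑ k, Bm k i * Bm k j := by rw [← hfact]
        _ = ∑ k, (c i * Bm k i) * (c j * Bm k j) * K i j ^ m := by
            rw [Finset.mul_sum]
            exact Finset.sum_congr rfl fun k _ => by ring
    calc (0:ℝ) ≤ ∑ k, ∑ i, ∑ j, (c i * Bm k i) * (c j * Bm k j) * K i j ^ m :=
          Finset.sum_nonneg fun k _ => ih (fun i => c i * Bm k i)
      _ = ∑ i, ∑ j, ∑ k, (c i * Bm k i) * (c j * Bm k j) * K i j ^ m :=
          (sw_sum_comm3 _).symm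
      _ = ∑ i, ∑ j, c i * c j * K i j ^ (m + 1) := by
          exact Finset.sum_congr rfl fun i _ => Finset.sum_congr rfl fun j _ =>
            (hterm i j).symm

/-- The entrywise exponential of a PSD kernel is PSD (sum form). -/
lemma sw_psd_exp {n : ℕ} (K : Fin n → Fin n → ℝ) (hsym : ∀ i j, K i j = K j i)
    (hpsd : ∀ c : Fin n → ℝ, 0 ≤ ∑ i, ∑ j, c i * c j * K i j) (c : Fin n → ℝ) :
    0 ≤ ∑ i, ∑ j, c i * c j * Real.exp (K i j) := by
  have hexp : ∀ x : ℝ, Real.exp x = ∑' m : ℕ, x ^ m / (Nat.factorial m : ℝ) := by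
    intro x
    rw [Real.exp_eq_exp_ℝ, NormedSpace.exp_eq_tsum_div]
  have hsmm : ∀ i j, Summable (fun m : ℕ => c i * c j * (K i j ^ m / (Nat.factorial m : ℝ))) := fun i j =>
    (Real.summable_pow_div_factorial (K i j)).mul_left _
  calc (0:ℝ) ≤ ∑' m : ℕ, ∑ i, ∑ j, c i * c j * (K i j ^ m / (Nat.factorial m : ℝ)) := by
        refine tsum_nonneg fun m => ?_
        have h1 : ∀ i j, c i * c j * (K i j ^ m / (Nat.factorial m : ℝ))
            = (c i * c j * K i j ^ m) * ((Nat.factorial m : ℝ))⁻¹ := fun i j => by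
          rw [div_eq_mul_inv]; ring
        simp only [h1, ← Finset.sum_mul]
        exact mul_nonneg (sw_psd_pow K hsym hpsd m c)
          (inv_nonneg.2 (Nat.cast_nonneg _))
    _ = ∑ i, ∑' m : ℕ, ∑ j, c i * c j * (K i j ^ m / (Nat.factorial m : ℝ)) :=
        Summable.tsum_finsetSum fun i _ => summable_sum fun j _ => hsmm i j
    _ = ∑ i, ∑ j, ∑' m : ℕ, c i * c j * (K i j ^ m / (Nat.factorial m : ℝ)) :=
        Finset.sum_congr rfl fun i _ => Summable.tsum_finsetSum fun j _ => hsmm i j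
    _ = ∑ i, ∑ j, c i * c j * Real.exp (K i j) := by
        refine Finset.sum_congr rfl fun i _ => Finset.sum_congr rfl fun j _ => ?_
        rw [hexp, tsum_mul_left]

/-- Schoenberg-type theorem, sum form: the exponential of the negative of a
conditionally negative definite symmetric kernel vanishing on the diagonal is PSD. -/
lemma sw_schoenberg {n : ℕ} (ψ : Fin (n+1) → Fin (n+1) → ℝ)
    (hsym : ∀ i j, ψ i j = ψ j i) (hdiag : ∀ i, ψ i i = 0)
    (hcnd : ∀ c : Fin (n+1) → ℝ, ∑ i, c i = 0 → ∑ i, ∑ j, c i * c j * ψ i j ≤ 0)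
    (c : Fin (n+1) → ℝ) : 0 ≤ ∑ i, ∑ j, c i * c j * Real.exp (-ψ i j) := by
  classical
  set K : Fin (n+1) → Fin (n+1) → ℝ := fun i j => ψ i 0 + ψ 0 j - ψ i j with hK
  have hKsym : ∀ i j, K i j = K j i := by
    intro i j
    simp only [hK, hsym i j, hsym i 0, hsym 0 j]
    ring
  have hKpsd : ∀ b : Fin (n+1) → ℝ, 0 ≤ ∑ i, ∑ j, b i * b j * K i j := by
    intro b
    set s : ℝ := ∑ i, b i with hs
    set u : ℝ := ∑ i, b i * ψ i 0 with hu
    have hv : ∑ j, b j * ψ 0 j = u :=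
      Finset.sum_congr rfl fun j _ => by rw [hsym 0 j]
    set b' : Fin (n+1) → ℝ := fun i => b i - (if i = 0 then s else 0) with hb'
    have hb'sum : ∑ i, b' i = 0 := by
      simp only [hb', Finset.sum_sub_distrib]
      rw [Finset.sum_ite_eq' Finset.univ (0 : Fin (n+1)) (fun _ => s)]
      simp [hs]
    have hT := hcnd b' hb'sum
    -- expand the CND sum
    have hterm : ∀ i j, b' i * b' j * ψ i j
        = b i * b j * ψ i j
          - (if i = 0 then s * (b j * ψ i j) else 0)
          - (if j = 0 then (b i * ψ i j) * s else 0)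
          + (if i = 0 then (if j = 0 then s * s * ψ i j else 0) else 0) := by
      intro i j
      simp only [hb']
      split_ifs <;> ring
    have hrow2 : ∀ i : Fin (n+1), (∑ j, (if i = 0 then s * (b j * ψ i j) else 0))
        = (if i = 0 then s * (∑ j, b j * ψ 0 j) else 0) := by
      intro i
      by_cases hi : i = 0 <;> simp [hi, Finset.mul_sum]
    have h2 : ∑ i, ∑ j, (if i = 0 then s * (b j * ψ i j) else 0) = s * u := by
      rw [Finset.sum_congr rfl fun i _ => hrow2 i,
        Finset.sum_ite_eq' Finset.univ (0 : Fin (n+1))]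
      simp [hv]
    have hrow3 : ∀ i : Fin (n+1), (∑ j, (if j = 0 then (b i * ψ i j) * s else 0))
        = (b i * ψ i 0) * s := by
      intro i
      rw [Finset.sum_ite_eq' Finset.univ (0 : Fin (n+1))]
      simp
    have h3 : ∑ i, ∑ j, (if j = 0 then (b i * ψ i j) * s else 0) = u * s := by
      rw [Finset.sum_congr rfl fun i _ => hrow3 i, ← Finset.sum_mul, hu]
    have hrow4 : ∀ i : Fin (n+1),
        (∑ j, (if i = 0 then (if j = 0 then s * s * ψ i j else 0) else 0))
        = (if i = 0 then s * s * ψ i 0 else 0) := by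
      intro i
      by_cases hi : i = 0 <;>
        simp [hi, Finset.sum_ite_eq' Finset.univ (0 : Fin (n+1))]
    have h4 : ∑ i, ∑ j, (if i = 0 then (if j = 0 then s * s * ψ i j else 0) else 0) = 0 := by
      rw [Finset.sum_congr rfl fun i _ => hrow4 i,
        Finset.sum_ite_eq' Finset.univ (0 : Fin (n+1))]
      simp [hdiag 0]
    have hexp : ∑ i, ∑ j, b' i * b' j * ψ i j
        = (∑ i, ∑ j, b i * b j * ψ i j) - s * u - u * s + 0 := by
      simp only [hterm, Finset.sum_add_distrib, Finset.sum_sub_distrib]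
      rw [h2, h3, h4]
    -- expand the goal sum
    have hg1 : ∑ i, ∑ j, b i * b j * ψ i 0 = u * s := by
      have : ∀ i : Fin (n+1), ∑ j, b i * b j * ψ i 0 = (b i * ψ i 0) * s := by
        intro i
        rw [hs, Finset.mul_sum]
        exact Finset.sum_congr rfl fun j _ => by ring
      rw [Finset.sum_congr rfl fun i _ => this i, ← Finset.sum_mul, hu]
    have hg2 : ∑ i, ∑ j, b i * b j * ψ 0 j = s * u := by
      have : ∀ i : Fin (n+1), ∑ j, b i * b j * ψ 0 j = b i * u := by
        intro i
        rw [← hv, Finset.mul_sum]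
        exact Finset.sum_congr rfl fun j _ => by ring
      rw [Finset.sum_congr rfl fun i _ => this i, ← Finset.sum_mul, hs]
    have hgoal : ∑ i, ∑ j, b i * b j * K i j
        = u * s + s * u - ∑ i, ∑ j, b i * b j * ψ i j := by
      have : ∀ i j, b i * b j * K i j
          = b i * b j * ψ i 0 + b i * b j * ψ 0 j - b i * b j * ψ i j := by
        intro i j; simp only [hK]; ring
      simp only [this, Finset.sum_add_distrib, Finset.sum_sub_distrib]
      rw [hg1, hg2]
    rw [hgoal]
    linarith [hexp ▸ hT]
  have := sw_psd_exp K hKsym hKpsd (fun i => c i * Real.exp (-ψ i 0))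
  calc (0:ℝ) ≤ ∑ i, ∑ j, (c i * Real.exp (-ψ i 0)) * (c j * Real.exp (-ψ j 0))
        * Real.exp (K i j) := this
    _ = ∑ i, ∑ j, c i * c j * Real.exp (-ψ i j) := by
      refine Finset.sum_congr rfl fun i _ => Finset.sum_congr rfl fun j _ => ?_
      have harg : -ψ i j = (-ψ i 0) + ((-ψ j 0) + K i j) := by
        simp only [hK, hsym 0 j]; ring
      rw [harg, Real.exp_add, Real.exp_add]
      ring


/-- A measurable version of the quantile function of the pushforward of `P`
under `x ↦ ⟪x, θ⟫`, written as a countable infimum over the rationals. -/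
noncomputable def swQ {r : ℕ} (P : Measure (EuclideanSpace ℝ (Fin r))) (R : ℝ)
    (θ : Metric.sphere (0 : EuclideanSpace ℝ (Fin r)) 1) (t : ℝ) : ℝ :=
  ⨅ x : ℚ,
    if t ≤ (P {y | ⟪y, (θ : EuclideanSpace ℝ (Fin r))⟫ ≤ (x : ℝ)}).toReal then (x : ℝ) else R

lemma swQ_measurable {r : ℕ} (P : Measure (EuclideanSpace ℝ (Fin r)))
    [IsProbabilityMeasure P] (R : ℝ) :
    Measurable fun p : (Metric.sphere (0 : EuclideanSpace ℝ (Fin r)) 1) × ℝ =>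
      swQ P R p.1 p.2 := by
  apply Measurable.iInf
  intro x
  have hs : MeasurableSet {p : (Metric.sphere (0 : EuclideanSpace ℝ (Fin r)) 1) ×
      EuclideanSpace ℝ (Fin r) | ⟪p.2, (p.1 : EuclideanSpace ℝ (Fin r))⟫ ≤ (x : ℝ)} := by
    have hcont : Continuous fun p : (Metric.sphere (0 : EuclideanSpace ℝ (Fin r)) 1) ×
        EuclideanSpace ℝ (Fin r) => ⟪p.2, (p.1 : EuclideanSpace ℝ (Fin r))⟫ :=
      continuous_snd.inner (continuous_subtype_val.comp continuous_fst)
    exact measurableSet_le hcont.measurable measurable_const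
  have hF : Measurable fun θ : (Metric.sphere (0 : EuclideanSpace ℝ (Fin r)) 1) =>
      (P {y | ⟪y, (θ : EuclideanSpace ℝ (Fin r))⟫ ≤ (x : ℝ)}).toReal := by
    have := (measurable_measure_prodMk_left (ν := P) hs).ennreal_toReal
    simpa [Set.preimage_setOf_eq] using this
  exact Measurable.ite (measurableSet_le measurable_snd (hF.comp measurable_fst))
    measurable_const measurable_const

lemma swQ_eq {r : ℕ} (P : Measure (EuclideanSpace ℝ (Fin r))) [IsProbabilityMeasure P]
    (Ω : Set (EuclideanSpace ℝ (Fin r))) (hPΩ : P Ω = 1) (R : ℝ) (hR : 0 ≤ R)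
    (hΩR : ∀ y ∈ Ω, ‖y‖ ≤ R)
    (θ : Metric.sphere (0 : EuclideanSpace ℝ (Fin r)) 1) {t : ℝ}
    (ht : t ∈ Set.Ioc (0 : ℝ) 1) :
    invCDF (P.map fun y => ⟪y, (θ : EuclideanSpace ℝ (Fin r))⟫) t = swQ P R θ t ∧
      |swQ P R θ t| ≤ R := by
  set f : EuclideanSpace ℝ (Fin r) → ℝ := fun y => ⟪y, (θ : EuclideanSpace ℝ (Fin r))⟫ with hf
  have hfm : Measurable f :=
    (continuous_id.inner continuous_const).measurable
  set S : Set ℝ := {x : ℝ | t ≤ (P {y | f y ≤ x}).toReal} with hS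
  have hθ : ‖(θ : EuclideanSpace ℝ (Fin r))‖ = 1 := by
    have := θ.2
    simpa [mem_sphere_zero_iff_norm] using this
  -- upper bound on |⟪y, θ⟫| for y ∈ Ω
  have hinner : ∀ y ∈ Ω, |f y| ≤ R := by
    intro y hy
    calc |f y| ≤ ‖y‖ * ‖(θ : EuclideanSpace ℝ (Fin r))‖ := abs_real_inner_le_norm _ _
      _ = ‖y‖ := by rw [hθ, mul_one]
      _ ≤ R := hΩR y hy
  -- R ∈ S
  have hRmem : R ∈ S := by
    have hsub : Ω ⊆ {y | f y ≤ R} := fun y hy => le_trans (le_abs_self _) (hinner y hy)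
    have h1 : P {y | f y ≤ R} = 1 :=
      le_antisymm prob_le_one (hPΩ ▸ measure_mono hsub)
    simp only [hS, Set.mem_setOf_eq, h1, ENNReal.toReal_one]
    exact ht.2
  -- lower bound for members of S
  have hlb : ∀ x ∈ S, -R ≤ x := by
    intro x hx
    by_contra hcon
    push_neg at hcon
    have hA : MeasurableSet {y | f y ≤ x} := measurableSet_le hfm measurable_const
    have hdisj : Ω ⊆ {y | f y ≤ x}ᶜ := by
      intro y hy hmem
      have : -R ≤ f y := neg_le_of_abs_le (hinner y hy)
      simp only [Set.mem_setOf_eq] at hmem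
      linarith
    have h1 : P {y | f y ≤ x}ᶜ = 1 :=
      le_antisymm prob_le_one (hPΩ ▸ measure_mono hdisj)
    have h2 : P {y | f y ≤ x} = 0 := by
      have hadd := measure_add_measure_compl (μ := P) hA
      rw [h1, measure_univ] at hadd
      have h3 := congrArg (· - 1) hadd
      simpa [ENNReal.add_sub_cancel_right] using h3
    rw [hS, Set.mem_setOf_eq, h2] at hx
    simp at hx
    linarith [ht.1]
  have hSne : S.Nonempty := ⟨R, hRmem⟩
  have hSbdd : BddBelow S := ⟨-R, hlb⟩
  have hmono : ∀ x ∈ S, ∀ x', x ≤ x' → x' ∈ S := by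
    intro x hx x' hxx'
    refine le_trans hx (ENNReal.toReal_mono (measure_ne_top _ _) ?_)
    exact measure_mono fun y hy => le_trans hy hxx'
  -- the defining set of invCDF is S
  have hset : {x : ℝ | t ≤ ((P.map f) (Set.Iic x)).toReal} = S := by
    ext x
    rw [Set.mem_setOf_eq, Measure.map_apply hfm measurableSet_Iic]
    rfl
  have hbddrange : BddBelow (Set.range fun x : ℚ =>
      if t ≤ (P {y | f y ≤ (x : ℝ)}).toReal then (x : ℝ) else R) := by
    refine ⟨-R, ?_⟩
    rintro _ ⟨x, rfl⟩
    dsimp only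
    split_ifs with h
    · exact hlb _ h
    · linarith
  have heq : sInf S = swQ P R θ t := by
    apply le_antisymm
    · refine le_ciInf fun x => ?_
      split_ifs with h
      · exact csInf_le hSbdd h
      · exact csInf_le hSbdd hRmem
    · refine le_of_forall_pos_le_add fun ε hε => ?_
      obtain ⟨x, hx1, hx2⟩ := exists_rat_btwn (lt_add_of_pos_right (sInf S) hε)
      have hxS : (x : ℝ) ∈ S := by
        obtain ⟨y, hyS, hyx⟩ := exists_lt_of_csInf_lt hSne hx1
        exact hmono y hyS _ hyx.le
      calc swQ P R θ t ≤ if t ≤ (P {y | f y ≤ ((x:ℚ) : ℝ)}).toReal then ((x:ℚ) : ℝ) else R :=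
            ciInf_le hbddrange x
        _ = (x : ℝ) := if_pos hxS
        _ ≤ sInf S + ε := hx2.le
  constructor
  · rw [invCDF, hset, heq]
  · rw [← heq, abs_le]
    exact ⟨le_csInf hSne hlb, csInf_le hSbdd hRmem⟩

lemma sw_symm {r : ℕ} (P Q : Measure (EuclideanSpace ℝ (Fin r))) :
    slicedW1 P Q = slicedW1 Q P := by
  rw [slicedW1, slicedW1]
  refine integral_congr_ae (Filter.Eventually.of_forall fun θ => ?_)
  refine setIntegral_congr_fun measurableSet_Ioc fun t _ => abs_sub_comm _ _


lemma sw_self {r : ℕ} (P : Measure (EuclideanSpace ℝ (Fin r))) :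
    slicedW1 P P = 0 := by
  simp [slicedW1, sub_self]

lemma sw_inv_mul_le_one (a : ℝ≥0∞) : a⁻¹ * a ≤ 1 := by
  rcases eq_or_ne a 0 with h | h
  · simp [h]
  rcases eq_or_ne a ∞ with h' | h'
  · simp [h']
  · rw [ENNReal.inv_mul_cancel h h']

instance sw_uniformSphere_finite (r : ℕ) : IsFiniteMeasure (uniformSphere r) := by
  constructor
  rw [uniformSphere, Measure.smul_apply, smul_eq_mul]
  exact lt_of_le_of_lt (sw_inv_mul_le_one _) ENNReal.one_lt_top

/-- Conditional negative definiteness of the sliced 1-Wasserstein distance matrix. -/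
lemma sw_cnd {r n : ℕ} (Ω : Set (EuclideanSpace ℝ (Fin r))) (R : ℝ) (hR : 0 ≤ R)
    (hΩR : ∀ y ∈ Ω, ‖y‖ ≤ R) (P : Fin n → Measure (EuclideanSpace ℝ (Fin r)))
    (hprob : ∀ i, IsProbabilityMeasure (P i)) (hPΩ : ∀ i, P i Ω = 1)
    (c : Fin n → ℝ) (hc : ∑ i, c i = 0) :
    ∑ i, ∑ j, c i * c j * slicedW1 (P i) (P j) ≤ 0 := by
  set Sph := Metric.sphere (0 : EuclideanSpace ℝ (Fin r)) 1 with hSph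
  set G : Fin n → Sph × ℝ → ℝ := fun i p => swQ (P i) R p.1 p.2 with hG
  have hGmeas : ∀ i, Measurable (G i) := fun i => by
    haveI := hprob i; exact swQ_measurable (P i) R
  have hGbd : ∀ i θ t, t ∈ Set.Ioc (0:ℝ) 1 → |G i (θ, t)| ≤ R := by
    intro i θ t ht
    haveI := hprob i
    exact (swQ_eq (P i) Ω (hPΩ i) R hR hΩR θ ht).2
  set g : Fin n → Fin n → Sph → ℝ :=
    fun i j θ => ∫ t in Set.Ioc (0:ℝ) 1, |G i (θ, t) - G j (θ, t)| with hg
  have hSW : ∀ i j, slicedW1 (P i) (P j) = ∫ θ, g i j θ ∂(uniformSphere r) := by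
    intro i j
    haveI := hprob i; haveI := hprob j
    rw [slicedW1]
    refine integral_congr_ae (Filter.Eventually.of_forall fun θ => ?_)
    refine setIntegral_congr_fun measurableSet_Ioc fun t ht => ?_
    rw [(swQ_eq (P i) Ω (hPΩ i) R hR hΩR θ ht).1, (swQ_eq (P j) Ω (hPΩ j) R hR hΩR θ ht).1]
  have htMeas : ∀ i (θ : Sph), Measurable fun t => G i (θ, t) := fun i θ =>
    (hGmeas i).comp (measurable_const.prodMk measurable_id)
  have habs2R : ∀ i j (θ : Sph) t, t ∈ Set.Ioc (0:ℝ) 1 → |G i (θ,t) - G j (θ,t)| ≤ 2 * R := by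
    intro i j θ t ht
    have h1 := hGbd i θ t ht
    have h2 := hGbd j θ t ht
    have := abs_sub (G i (θ,t)) (G j (θ,t))
    linarith [abs_sub (G i (θ,t)) (G j (θ,t))]
  have htInt : ∀ i j (θ : Sph),
      IntegrableOn (fun t => |G i (θ, t) - G j (θ, t)|) (Set.Ioc (0:ℝ) 1) volume := by
    intro i j θ
    refine Integrable.mono' (g := fun _ => 2 * R)
      (integrableOn_const (by rw [Real.volume_Ioc]; exact ENNReal.ofReal_lt_top.ne))
      (((htMeas i θ).sub (htMeas j θ)).abs).aestronglyMeasurable ?_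
    filter_upwards [ae_restrict_mem measurableSet_Ioc] with t ht
    rw [Real.norm_eq_abs, abs_abs]
    exact habs2R i j θ t ht
  have hgmeas : ∀ i j, StronglyMeasurable (g i j) := by
    intro i j
    have h : StronglyMeasurable fun p : Sph × ℝ => |G i p - G j p| :=
      (((hGmeas i).sub (hGmeas j)).abs).stronglyMeasurable
    exact h.integral_prod_right'
  have hg0 : ∀ i j θ, 0 ≤ g i j θ := fun i j θ =>
    integral_nonneg fun t => abs_nonneg _
  have hgub : ∀ i j θ, g i j θ ≤ 2 * R := by
    intro i j θ
    calc g i j θ ≤ ∫ _ in Set.Ioc (0:ℝ) 1, 2 * R :=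
          setIntegral_mono_on (htInt i j θ)
            (integrableOn_const (by rw [Real.volume_Ioc]; exact ENNReal.ofReal_lt_top.ne))
            measurableSet_Ioc (fun t ht => habs2R i j θ t ht)
      _ = 2 * R := by
          rw [setIntegral_const, Real.volume_real_Ioc, smul_eq_mul]
          norm_num
  have hgInt : ∀ i j, Integrable (g i j) (uniformSphere r) := by
    intro i j
    refine Integrable.mono' (integrable_const (2 * R)) (hgmeas i j).aestronglyMeasurable ?_
    refine Filter.Eventually.of_forall fun θ => ?_
    rw [Real.norm_eq_abs, abs_of_nonneg (hg0 i j θ)]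
    exact hgub i j θ
  calc ∑ i, ∑ j, c i * c j * slicedW1 (P i) (P j)
      = ∑ i, ∑ j, ∫ θ, c i * c j * g i j θ ∂(uniformSphere r) := by
        refine Finset.sum_congr rfl fun i _ => Finset.sum_congr rfl fun j _ => ?_
        rw [hSW i j, integral_const_mul]
    _ = ∫ θ, ∑ i, ∑ j, c i * c j * g i j θ ∂(uniformSphere r) := by
        rw [integral_finset_sum _ fun i _ =>
          integrable_finset_sum _ fun j _ => (hgInt i j).const_mul _]
        exact Finset.sum_congr rfl fun i _ =>
          (integral_finset_sum _ fun j _ => (hgInt i j).const_mul _).symm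
    _ ≤ 0 := by
        refine integral_nonpos fun θ => ?_
        have hrow : ∑ i, ∑ j, c i * c j * g i j θ
            = ∫ t in Set.Ioc (0:ℝ) 1, ∑ i, ∑ j, c i * c j * |G i (θ, t) - G j (θ, t)| := by
          rw [integral_finset_sum _ fun i _ =>
            integrable_finset_sum _ fun j _ => (htInt i j θ).const_mul _]
          refine Finset.sum_congr rfl fun i _ => ?_
          rw [integral_finset_sum _ fun j _ => (htInt i j θ).const_mul _]
          exact Finset.sum_congr rfl fun j _ => by rw [integral_const_mul]
        rw [hrow]
        exact integral_nonpos fun t => sw_abs_cnd (fun i => G i (θ, t)) c hc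

/-- **The Gaussian (Laplace-type) Sliced 1-Wasserstein kernel is positive definite.**
Let `Ω ⊂ ℝ^r` be compact.  For every `γ ≥ 0`, the kernel
`K₁(P,Q) = exp(−γ·d_{SW₁}(P,Q))` is positive definite on the probability measures on `Ω`:
for every `n`, all probability measures `P₁, …, Pₙ` on `Ω` and all `c ∈ ℝⁿ`,
`∑_{i,j} cᵢ cⱼ exp(−γ·d_{SW₁}(Pᵢ,Pⱼ)) ≥ 0`. -/
theorem gaussian_slicedW1_kernel_posdef {r : ℕ} (Ω : Set (EuclideanSpace ℝ (Fin r)))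
    (hΩ : IsCompact Ω) (γ : ℝ) (hγ : 0 ≤ γ) :
    ∀ (n : ℕ) (P : Fin n → Measure (EuclideanSpace ℝ (Fin r))),
      (∀ i, IsProbabilityMeasure (P i)) → (∀ i, P i Ω = 1) →
      ∀ c : Fin n → ℝ,
        0 ≤ ∑ i, ∑ j, c i * c j * Real.exp (-γ * slicedW1 (P i) (P j)) := by
  intro n P hprob hPΩ c
  cases n with
  | zero => simp
  | succ n =>
    obtain ⟨R₀, hR₀⟩ := hΩ.isBounded.subset_closedBall 0
    set R : ℝ := max R₀ 0 with hRdef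
    have hR : 0 ≤ R := le_max_right _ _
    have hΩR : ∀ y ∈ Ω, ‖y‖ ≤ R := by
      intro y hy
      have := hR₀ hy
      rw [Metric.mem_closedBall, dist_zero_right] at this
      exact le_trans this (le_max_left _ _)
    have hψsym : ∀ i j : Fin (n+1),
        γ * slicedW1 (P i) (P j) = γ * slicedW1 (P j) (P i) := fun i j => by
      rw [sw_symm (P i) (P j)]
    have hψdiag : ∀ i : Fin (n+1), γ * slicedW1 (P i) (P i) = 0 := fun i => by
      rw [sw_self]; ring
    have hψcnd : ∀ c' : Fin (n+1) → ℝ, ∑ i, c' i = 0 →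
        ∑ i, ∑ j, c' i * c' j * (γ * slicedW1 (P i) (P j)) ≤ 0 := by
      intro c' hc'
      have h := sw_cnd Ω R hR hΩR P hprob hPΩ c' hc'
      have hre : ∑ i, ∑ j, c' i * c' j * (γ * slicedW1 (P i) (P j))
          = γ * ∑ i, ∑ j, c' i * c' j * slicedW1 (P i) (P j) := by
        rw [Finset.mul_sum]
        refine Finset.sum_congr rfl fun i _ => ?_
        rw [Finset.mul_sum]
        exact Finset.sum_congr rfl fun j _ => by ring
      rw [hre]
      exact mul_nonpos_of_nonneg_of_nonpos hγ h
    have := sw_schoenberg (fun i j => γ * slicedW1 (P i) (P j)) hψsym hψdiag hψcnd c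
    simpa only [neg_mul] using this
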